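/- arXiv:1703.01535 — 3 statements merged into one kernel-verified Lean document; each statement's English description precedes it below -/
import Mathlib

section
/- Let n ≥ 1, let (P_k)_{k≥0} be a harmonic sequence of polynomials, and let f be n-times differentiable on an open interval containing [a,b] with f^(n) absolutely continuous and essentially bounded on [a,b]. Then for every x ∈ [a,(a+b)/2], | (1/n)·( (f(x)+f(a+b−x))/2 + Σ_{k=1}^{n−1} ( T_k(x) + F̃_k(a,b) ) ) − (1/(b−a))·∫_a^b f(y) dy | ≤ (1/(n·(b−a)))·( ∫_a^b |P_{n−1}(t)|·|S(t,x)| dt )·‖f^(n)‖_{L^∞[a,b]}. -/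
open MeasureTheory Set

/-- The Guessab–Schmeisser / Fink-type kernel `S(t,x)` on `[a,b]`. -/
noncomputable def Skernel (a b x t : ℝ) : ℝ :=
  if t ≤ x then t - a else if t < a + b - x then t - (a + b) / 2 else t - b

/-- `g` is absolutely continuous on `[a,b]`. -/
def AbsCont (g : ℝ → ℝ) (a b : ℝ) : Prop :=
  ∃ h : ℝ → ℝ, IntervalIntegrable h MeasureTheory.volume a b ∧
    ∀ t ∈ Set.Icc a b, g t = g a + ∫ s in a..t, h s

/-- A harmonic sequence of polynomials: `P 0 = 1` and `(P (k+1))' = P k`. -/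
def HarmonicSeq (P : ℕ → Polynomial ℝ) : Prop :=
  P 0 = 1 ∧ ∀ k, (P (k + 1)).derivative = P k

/-- The term `T_k(x)` of the harmonic-sequence expansion. -/
noncomputable def Tterm (P : ℕ → Polynomial ℝ) (f : ℝ → ℝ) (a b x : ℝ) (k : ℕ) : ℝ :=
  ((-1 : ℝ) ^ k / 2) *
    ((P k).eval x * iteratedDeriv k f x +
      (P k).eval (a + b - x) * iteratedDeriv k f (a + b - x))

/-- The term `F̃_k(a,b)` of the harmonic-sequence expansion. -/
noncomputable def Ftilde (P : ℕ → Polynomial ℝ) (f : ℝ → ℝ) (n : ℕ) (a b : ℝ) (k : ℕ) : ℝ :=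
  ((-1 : ℝ) ^ k * ((n : ℝ) - k) / (b - a)) *
    ((P k).eval a * iteratedDeriv (k - 1) f a - (P k).eval b * iteratedDeriv (k - 1) f b)

/-- The essential supremum of `|g|` on `[a,b]` (the `L^∞[a,b]` norm). -/
noncomputable def essSupAbs (g : ℝ → ℝ) (a b : ℝ) : ℝ :=
  essSup (fun t => |g t|) (MeasureTheory.volume.restrict (Set.Icc a b))

noncomputable def Cpoly (P : ℕ → Polynomial ℝ) (n : ℕ) (c : ℝ) : ℕ → Polynomial ℝ :=
  fun j => if j = 0 then Polynomial.C (n : ℝ)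
    else P (j - 1) * (Polynomial.X - Polynomial.C c) + Polynomial.C ((n : ℝ) - j) * P j

lemma Cpoly_derivative (P : ℕ → Polynomial ℝ) (hP : HarmonicSeq P) (n : ℕ) (c : ℝ) (j : ℕ) :
    (Cpoly P n c (j + 1)).derivative = Cpoly P n c j := by
  obtain ⟨hP0, hPd⟩ := hP
  cases j with
  | zero =>
      have h1 := hPd 0
      simp only [zero_add] at h1
      simp [Cpoly, hP0, h1, Polynomial.derivative_mul, Polynomial.C_1]
  | succ j =>
      simp only [Cpoly, Nat.succ_ne_zero, if_false, Polynomial.derivative_mul,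
        Polynomial.derivative_add, Polynomial.derivative_C, Nat.add_sub_cancel,
        Polynomial.derivative_sub, Polynomial.derivative_X, hPd, zero_mul, zero_add,
        Polynomial.derivative_C_mul]
      have h1 : ((n : ℝ) - (j + 1 + 1 : ℕ)) = ((n : ℝ) - (j + 1 : ℕ)) - 1 := by
        push_cast; ring
      rw [h1, Polynomial.C_sub, Polynomial.C_1]
      ring

lemma parts_lemma (P : ℕ → Polynomial ℝ) (hP : HarmonicSeq P) (n : ℕ) (c α β : ℝ)
    (g : ℕ → ℝ → ℝ)
    (hg : ∀ k < n, ∀ t ∈ Set.uIcc α β, HasDerivAt (g k) (g (k + 1) t) t)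
    (hgc : ∀ k ≤ n, ContinuousOn (g k) (Set.uIcc α β)) :
    ∀ j ≤ n, ∫ t in α..β, (Cpoly P n c j).eval t * g j t
      = (-1 : ℝ) ^ j * ((∑ i ∈ Finset.range j, (-1 : ℝ) ^ (i + 1) *
          ((Cpoly P n c (i + 1)).eval β * g i β - (Cpoly P n c (i + 1)).eval α * g i α)) +
          n * ∫ t in α..β, g 0 t) := by
  intro j
  induction j with
  | zero =>
      intro _
      simp [Cpoly, intervalIntegral.integral_const_mul]
  | succ j ih =>
      intro hj
      have hj' : j ≤ n := Nat.le_of_succ_le hj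
      have hu : ∀ t ∈ Set.uIcc α β,
          HasDerivAt (fun t => (Cpoly P n c (j + 1)).eval t) ((Cpoly P n c j).eval t) t := by
        intro t _
        simpa [Cpoly_derivative P hP n c j] using (Cpoly P n c (j + 1)).hasDerivAt t
      have hv : ∀ t ∈ Set.uIcc α β, HasDerivAt (g j) (g (j + 1) t) t :=
        fun t ht => hg j (Nat.lt_of_succ_le hj) t ht
      have hu' : IntervalIntegrable (fun t => (Cpoly P n c j).eval t) volume α β :=
        (Polynomial.continuous _).intervalIntegrable α β
      have hv' : IntervalIntegrable (g (j + 1)) volume α β :=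
        (hgc (j + 1) hj).intervalIntegrable
      have IBP := intervalIntegral.integral_mul_deriv_eq_deriv_mul hu hv hu' hv'
      rw [IBP, ih hj', Finset.sum_range_succ]
      have hsq : ((-1 : ℝ)) ^ j * (-1) ^ j = 1 := by
        rw [← mul_pow]; norm_num
      linear_combination (Polynomial.eval α (Cpoly P n c (j + 1)) * g j α -
        Polynomial.eval β (Cpoly P n c (j + 1)) * g j β) * hsq

theorem stmt_14 (n : ℕ) (hn : 1 ≤ n) (P : ℕ → Polynomial ℝ) (hP : HarmonicSeq P)
    (a b c d : ℝ) (hab : a < b) (hca : c < a) (hbd : b < d) (f : ℝ → ℝ)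
    (hf : ContDiffOn ℝ (n : ℕ∞) f (Set.Ioo c d))
    (hAC : AbsCont (iteratedDeriv n f) a b)
    (hbdd : ∃ C : ℝ, ∀ᵐ t ∂(MeasureTheory.volume.restrict (Set.Icc a b)),
      |iteratedDeriv n f t| ≤ C)
    (x : ℝ) (hx : x ∈ Set.Icc a ((a + b) / 2)) :
    |(1 / (n : ℝ)) *
          ((f x + f (a + b - x)) / 2 +
            ∑ k ∈ Finset.Icc 1 (n - 1), (Tterm P f a b x k + Ftilde P f n a b k))
        - (1 / (b - a)) * ∫ y in a..b, f y|
      ≤ (1 / ((n : ℝ) * (b - a))) *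
          (∫ t in a..b, |(P (n - 1)).eval t| * |Skernel a b x t|) *
          essSupAbs (iteratedDeriv n f) a b := by
  clear hAC
  obtain ⟨m, rfl⟩ : ∃ m, n = m + 1 := ⟨n - 1, by omega⟩
  clear hn
  simp only [Nat.add_sub_cancel]
  have hax : a ≤ x := hx.1
  have hxm : x ≤ (a + b) / 2 := hx.2
  set y := a + b - x with hy
  have hxy : x ≤ y := by rw [hy]; linarith
  have hyb : y ≤ b := by rw [hy]; linarith
  have hab' : a ≤ b := hab.le
  have hba : (0 : ℝ) < b - a := by linarith
  have hba' : b - a ≠ 0 := ne_of_gt hba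
  have hN0 : ((m : ℝ) + 1) ≠ 0 := by positivity
  have hsub : Set.Icc a b ⊆ Set.Ioo c d :=
    fun t ht => ⟨lt_of_lt_of_le hca ht.1, lt_of_le_of_lt ht.2 hbd⟩
  have hopen : IsOpen (Set.Ioo c d) := isOpen_Ioo
  -- iterated derivatives within the open interval agree with global ones
  have hEq : ∀ k, ∀ t ∈ Set.Ioo c d,
      iteratedDerivWithin k f (Set.Ioo c d) t = iteratedDeriv k f t := by
    intro k t ht
    simp only [iteratedDerivWithin, iteratedDeriv,
      iteratedFDerivWithin_of_isOpen k hopen ht]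
  have hgc : ∀ k ≤ m + 1, ContinuousOn (iteratedDeriv k f) (Set.Icc a b) := by
    intro k hk
    have h1 : ContinuousOn (iteratedDerivWithin k f (Set.Ioo c d)) (Set.Ioo c d) :=
      hf.continuousOn_iteratedDerivWithin (by exact_mod_cast hk) hopen.uniqueDiffOn
    exact (h1.congr fun t ht => (hEq k t ht).symm).mono hsub
  have hg : ∀ k < m + 1, ∀ t ∈ Set.Icc a b,
      HasDerivAt (iteratedDeriv k f) (iteratedDeriv (k + 1) f t) t := by
    intro k hk t ht
    have ht' := hsub ht
    have hdo : DifferentiableOn ℝ (iteratedDerivWithin k f (Set.Ioo c d)) (Set.Ioo c d) :=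
      hf.differentiableOn_iteratedDerivWithin (by exact_mod_cast hk) hopen.uniqueDiffOn
    have h1 : DifferentiableAt ℝ (iteratedDerivWithin k f (Set.Ioo c d)) t :=
      (hdo t ht').differentiableAt (hopen.mem_nhds ht')
    have hev : iteratedDerivWithin k f (Set.Ioo c d) =ᶠ[nhds t] iteratedDeriv k f :=
      Filter.eventuallyEq_of_mem (hopen.mem_nhds ht') fun s hs => hEq k s hs
    have h2 : DifferentiableAt ℝ (iteratedDeriv k f) t := (hev.differentiableAt_iff).mp h1
    rw [iteratedDeriv_succ]
    exact h2.hasDerivAt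
  -- the three-piece integration-by-parts identity
  have hpiece : ∀ cc α β : ℝ, a ≤ α → α ≤ β → β ≤ b →
      ∫ t in α..β, (P m).eval t * (t - cc) * iteratedDeriv (m + 1) f t
        = (-1 : ℝ) ^ (m + 1) * ((∑ i ∈ Finset.range (m + 1), (-1 : ℝ) ^ (i + 1) *
            ((Cpoly P (m + 1) cc (i + 1)).eval β * iteratedDeriv i f β
              - (Cpoly P (m + 1) cc (i + 1)).eval α * iteratedDeriv i f α)) +
            ((m : ℝ) + 1) * ∫ t in α..β, f t) := by
    intro cc α β hαa hαβ hβb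
    have hIcc : Set.uIcc α β ⊆ Set.Icc a b := by
      rw [Set.uIcc_of_le hαβ]; exact Set.Icc_subset_Icc hαa hβb
    have h1 := parts_lemma P hP (m + 1) cc α β (fun k => iteratedDeriv k f)
      (fun k hk t ht => hg k hk t (hIcc ht))
      (fun k hk => (hgc k hk).mono hIcc) (m + 1) le_rfl
    simp only [iteratedDeriv_zero] at h1
    have h2 : ∫ t in α..β, (P m).eval t * (t - cc) * iteratedDeriv (m + 1) f t
        = ∫ t in α..β, (Cpoly P (m + 1) cc (m + 1)).eval t * iteratedDeriv (m + 1) f t := by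
      refine intervalIntegral.integral_congr fun t _ => ?_
      have : (Cpoly P (m + 1) cc (m + 1)).eval t = (P m).eval t * (t - cc) := by
        simp [Cpoly]
      rw [this]
    rw [h2, h1]
    push_cast
    ring
  -- measurability and boundedness of the kernel
  have hSmeas : Measurable (Skernel a b x) := by
    unfold Skernel
    refine Measurable.ite measurableSet_Iic ?_ (Measurable.ite measurableSet_Iio ?_ ?_) <;>
      exact measurable_id.sub measurable_const
  have hSb : ∀ t ∈ Set.Icc a b, |Skernel a b x t| ≤ b - a := by
    intro t ht
    obtain ⟨h1, h2⟩ := ht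
    unfold Skernel
    split_ifs <;> rw [abs_le] <;> constructor <;> linarith
  obtain ⟨CP, hCP⟩ := (isCompact_Icc (a := a) (b := b)).exists_bound_of_continuousOn
    (Polynomial.continuous (P m)).continuousOn
  obtain ⟨CG, hCG⟩ := (isCompact_Icc (a := a) (b := b)).exists_bound_of_continuousOn
    (hgc (m + 1) le_rfl)
  have hCP0 : 0 ≤ CP := le_trans (norm_nonneg _) (hCP a (Set.left_mem_Icc.mpr hab'))
  have hCG0 : 0 ≤ CG := le_trans (norm_nonneg _) (hCG a (Set.left_mem_Icc.mpr hab'))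
  have hgm : AEStronglyMeasurable (iteratedDeriv (m + 1) f)
      (volume.restrict (Set.Ioc a b)) :=
    ((hgc (m + 1) le_rfl).mono Set.Ioc_subset_Icc_self).aestronglyMeasurable measurableSet_Ioc
  have hFm : AEStronglyMeasurable
      (fun t => (P m).eval t * Skernel a b x t * iteratedDeriv (m + 1) f t)
      (volume.restrict (Set.Ioc a b)) :=
    (((Polynomial.continuous (P m)).aestronglyMeasurable).mul
      hSmeas.aestronglyMeasurable).mul hgm
  have hconst : ∀ C : ℝ, IntegrableOn (fun _ : ℝ => C) (Set.Ioc a b) volume :=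
    fun C => integrableOn_const measure_Ioc_lt_top.ne
  have hFint : IntervalIntegrable
      (fun t => (P m).eval t * Skernel a b x t * iteratedDeriv (m + 1) f t) volume a b := by
    rw [intervalIntegrable_iff_integrableOn_Ioc_of_le hab']
    refine Integrable.mono' (hconst (CP * (b - a) * CG)) hFm
      ((ae_restrict_iff' measurableSet_Ioc).mpr (Filter.Eventually.of_forall ?_))
    intro t ht
    have ht' : t ∈ Set.Icc a b := Set.Ioc_subset_Icc_self ht
    have h1 := hCP t ht'
    have h2 := hCG t ht'
    have h3 := hSb t ht'
    rw [Real.norm_eq_abs] at h1 h2 ⊢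
    rw [abs_mul, abs_mul]
    have h4 : |(P m).eval t| * |Skernel a b x t| ≤ CP * (b - a) :=
      mul_le_mul h1 h3 (abs_nonneg _) hCP0
    exact mul_le_mul h4 h2 (abs_nonneg _) (by positivity)
  have hGint : IntervalIntegrable
      (fun t => |(P m).eval t| * |Skernel a b x t|) volume a b := by
    rw [intervalIntegrable_iff_integrableOn_Ioc_of_le hab']
    refine Integrable.mono' (hconst (CP * (b - a)))
      (((Polynomial.continuous (P m)).abs.aestronglyMeasurable).mul
        hSmeas.abs.aestronglyMeasurable)
      ((ae_restrict_iff' measurableSet_Ioc).mpr (Filter.Eventually.of_forall ?_))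
    intro t ht
    have ht' : t ∈ Set.Icc a b := Set.Ioc_subset_Icc_self ht
    have h1 := hCP t ht'
    rw [Real.norm_eq_abs] at h1
    rw [Real.norm_eq_abs, abs_mul, abs_abs, abs_abs]
    exact mul_le_mul h1 (hSb t ht') (abs_nonneg _) hCP0
  -- rewrite the three pieces of the kernel integral
  have hss1 : Set.uIcc a x ⊆ Set.uIcc a b := by
    rw [Set.uIcc_of_le hax, Set.uIcc_of_le hab']
    exact Set.Icc_subset_Icc le_rfl (le_trans hxy hyb)
  have hss2 : Set.uIcc x y ⊆ Set.uIcc a b := by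
    rw [Set.uIcc_of_le hxy, Set.uIcc_of_le hab']
    exact Set.Icc_subset_Icc hax hyb
  have hss3 : Set.uIcc y b ⊆ Set.uIcc a b := by
    rw [Set.uIcc_of_le hyb, Set.uIcc_of_le hab']
    exact Set.Icc_subset_Icc (le_trans hax hxy) le_rfl
  have hFi1 : IntervalIntegrable
      (fun t => (P m).eval t * Skernel a b x t * iteratedDeriv (m + 1) f t) volume a x :=
    hFint.mono_set hss1
  have hFi2 : IntervalIntegrable
      (fun t => (P m).eval t * Skernel a b x t * iteratedDeriv (m + 1) f t) volume x y :=
    hFint.mono_set hss2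
  have hFi3 : IntervalIntegrable
      (fun t => (P m).eval t * Skernel a b x t * iteratedDeriv (m + 1) f t) volume y b :=
    hFint.mono_set hss3
  have hsplit : (∫ t in a..x, (P m).eval t * Skernel a b x t * iteratedDeriv (m + 1) f t)
      + (∫ t in x..y, (P m).eval t * Skernel a b x t * iteratedDeriv (m + 1) f t)
      + (∫ t in y..b, (P m).eval t * Skernel a b x t * iteratedDeriv (m + 1) f t)
      = ∫ t in a..b, (P m).eval t * Skernel a b x t * iteratedDeriv (m + 1) f t := by
    rw [intervalIntegral.integral_add_adjacent_intervals hFi1 hFi2,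
      intervalIntegral.integral_add_adjacent_intervals (hFi1.trans hFi2) hFi3]
  have hK1 : (∫ t in a..x, (P m).eval t * Skernel a b x t * iteratedDeriv (m + 1) f t)
      = ∫ t in a..x, (P m).eval t * (t - a) * iteratedDeriv (m + 1) f t := by
    refine intervalIntegral.integral_congr_ae (Filter.Eventually.of_forall fun t ht => ?_)
    rw [Set.uIoc_of_le hax] at ht
    have h1 : t ≤ x := ht.2
    simp [Skernel, h1]
  have hy0 : ∀ᵐ t : ℝ, t ≠ y := by
    rw [ae_iff]
    simp only [not_not, Set.setOf_eq_eq_singleton]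
    exact measure_singleton y
  have hK2 : (∫ t in x..y, (P m).eval t * Skernel a b x t * iteratedDeriv (m + 1) f t)
      = ∫ t in x..y, (P m).eval t * (t - (a + b) / 2) * iteratedDeriv (m + 1) f t := by
    refine intervalIntegral.integral_congr_ae ?_
    filter_upwards [hy0] with t hty ht
    rw [Set.uIoc_of_le hxy] at ht
    have h1 : ¬ t ≤ x := not_le.mpr ht.1
    have h2 : t < a + b - x := by
      have := lt_of_le_of_ne ht.2 hty
      rwa [hy] at this
    simp [Skernel, h1, h2]
  have hK3 : (∫ t in y..b, (P m).eval t * Skernel a b x t * iteratedDeriv (m + 1) f t)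
      = ∫ t in y..b, (P m).eval t * (t - b) * iteratedDeriv (m + 1) f t := by
    refine intervalIntegral.integral_congr_ae (Filter.Eventually.of_forall fun t ht => ?_)
    rw [Set.uIoc_of_le hyb] at ht
    have h0 : y < t := ht.1
    have h1 : ¬ t ≤ x := not_le.mpr (lt_of_le_of_lt hxy h0)
    have h2 : ¬ t < a + b - x := by rw [← hy]; exact not_lt.mpr h0.le
    simp [Skernel, h1, h2]
  -- integrability of f and splitting of its integral
  have hfc : ContinuousOn f (Set.Icc a b) := by
    have := hgc 0 (by omega)
    simpa [iteratedDeriv_zero] using this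
  have hfi1 : IntervalIntegrable f volume a x :=
    (hfc.mono ((Set.uIcc_of_le hab') ▸ hss1)).intervalIntegrable
  have hfi2 : IntervalIntegrable f volume x y :=
    (hfc.mono ((Set.uIcc_of_le hab') ▸ hss2)).intervalIntegrable
  have hfi3 : IntervalIntegrable f volume y b :=
    (hfc.mono ((Set.uIcc_of_le hab') ▸ hss3)).intervalIntegrable
  have hfsplit : (∫ t in a..x, f t) + (∫ t in x..y, f t) + (∫ t in y..b, f t)
      = ∫ t in a..b, f t := by
    rw [intervalIntegral.integral_add_adjacent_intervals hfi1 hfi2,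
      intervalIntegral.integral_add_adjacent_intervals (hfi1.trans hfi2) hfi3]
  -- per-index boundary identity
  have hterm : ∀ i ∈ Finset.range (m + 1),
      ((-1 : ℝ) ^ (i + 1) *
        ((Cpoly P (m + 1) a (i + 1)).eval x * iteratedDeriv i f x
          - (Cpoly P (m + 1) a (i + 1)).eval a * iteratedDeriv i f a)
      + (-1 : ℝ) ^ (i + 1) *
        ((Cpoly P (m + 1) ((a + b) / 2) (i + 1)).eval y * iteratedDeriv i f y
          - (Cpoly P (m + 1) ((a + b) / 2) (i + 1)).eval x * iteratedDeriv i f x)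
      + (-1 : ℝ) ^ (i + 1) *
        ((Cpoly P (m + 1) b (i + 1)).eval b * iteratedDeriv i f b
          - (Cpoly P (m + 1) b (i + 1)).eval y * iteratedDeriv i f y))
      = -((b - a) * (Tterm P f a b x i + Ftilde P f (m + 1) a b (i + 1))) := by
    intro i _
    have hev : ∀ cc t : ℝ, (Cpoly P (m + 1) cc (i + 1)).eval t
        = (P i).eval t * (t - cc) + (((m : ℝ) + 1) - ((i : ℝ) + 1)) * (P (i + 1)).eval t := by
      intro cc t
      simp only [Cpoly]
      rw [if_neg (Nat.succ_ne_zero i)]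
      simp only [Nat.add_sub_cancel, Polynomial.eval_add, Polynomial.eval_mul,
        Polynomial.eval_sub, Polynomial.eval_X, Polynomial.eval_C]
      push_cast
      ring
    simp only [hev, Tterm, Ftilde, Nat.add_sub_cancel, ← hy]
    push_cast
    field_simp
    ring
  -- sum reindexing
  have hT0 : Tterm P f a b x 0 = (f x + f y) / 2 := by
    simp only [Tterm, pow_zero, iteratedDeriv_zero, hP.1, Polynomial.eval_one, hy]
    ring
  have hsumT : ∑ i ∈ Finset.range (m + 1), Tterm P f a b x i
      = (f x + f y) / 2 + ∑ k ∈ Finset.Icc 1 m, Tterm P f a b x k := by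
    rw [Finset.sum_range_succ', hT0]
    have h1 : ∑ i ∈ Finset.range m, Tterm P f a b x (i + 1)
        = ∑ k ∈ Finset.Icc 1 m, Tterm P f a b x k := by
      rw [← Finset.Ico_add_one_right_eq_Icc, Finset.sum_Ico_eq_sum_range]
      refine Finset.sum_congr (by norm_num) fun i _ => by rw [add_comm 1 i]
    rw [h1]
    ring
  have hsumF : ∑ i ∈ Finset.range (m + 1), Ftilde P f (m + 1) a b (i + 1)
      = ∑ k ∈ Finset.Icc 1 m, Ftilde P f (m + 1) a b k := by
    rw [Finset.sum_range_succ]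
    have hFn : Ftilde P f (m + 1) a b (m + 1) = 0 := by
      simp [Ftilde]
    rw [hFn, add_zero]
    rw [← Finset.Ico_add_one_right_eq_Icc, Finset.sum_Ico_eq_sum_range]
    exact Finset.sum_congr (by norm_num) fun i _ => by rw [add_comm 1 i]
  -- the main identity
  set W : ℝ := (f x + f y) / 2 +
    ∑ k ∈ Finset.Icc 1 m, (Tterm P f a b x k + Ftilde P f (m + 1) a b k) with hW
  have hRval : (∫ t in a..b, (P m).eval t * Skernel a b x t * iteratedDeriv (m + 1) f t)
      = (-1 : ℝ) ^ (m + 1) * (-((b - a) * W) + ((m : ℝ) + 1) * ∫ t in a..b, f t) := by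
    rw [← hsplit, hK1, hK2, hK3,
      hpiece a a x le_rfl hax (le_trans hxy hyb),
      hpiece ((a + b) / 2) x y hax hxy hyb,
      hpiece b y b (le_trans hax hxy) hyb le_rfl]
    rw [← hfsplit]
    have hsum3 : (∑ i ∈ Finset.range (m + 1), (-1 : ℝ) ^ (i + 1) *
          ((Cpoly P (m + 1) a (i + 1)).eval x * iteratedDeriv i f x
            - (Cpoly P (m + 1) a (i + 1)).eval a * iteratedDeriv i f a))
        + (∑ i ∈ Finset.range (m + 1), (-1 : ℝ) ^ (i + 1) *
          ((Cpoly P (m + 1) ((a + b) / 2) (i + 1)).eval y * iteratedDeriv i f y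
            - (Cpoly P (m + 1) ((a + b) / 2) (i + 1)).eval x * iteratedDeriv i f x))
        + (∑ i ∈ Finset.range (m + 1), (-1 : ℝ) ^ (i + 1) *
          ((Cpoly P (m + 1) b (i + 1)).eval b * iteratedDeriv i f b
            - (Cpoly P (m + 1) b (i + 1)).eval y * iteratedDeriv i f y))
        = -((b - a) * W) := by
      rw [← Finset.sum_add_distrib, ← Finset.sum_add_distrib, Finset.sum_congr rfl hterm]
      have h2 : ∑ i ∈ Finset.range (m + 1),
          -((b - a) * (Tterm P f a b x i + Ftilde P f (m + 1) a b (i + 1)))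
          = -((b - a) * ((∑ i ∈ Finset.range (m + 1), Tterm P f a b x i)
              + ∑ i ∈ Finset.range (m + 1), Ftilde P f (m + 1) a b (i + 1))) := by
        rw [Finset.sum_neg_distrib, ← Finset.mul_sum, Finset.sum_add_distrib]
      rw [h2, hsumT, hsumF, hW, Finset.sum_add_distrib]
      ring
    rw [← hsum3]
    ring
  -- the essential supremum bound
  set M : ℝ := essSupAbs (iteratedDeriv (m + 1) f) a b with hM
  have hMae : ∀ᵐ t ∂(volume.restrict (Set.Icc a b)), |iteratedDeriv (m + 1) f t| ≤ M := by
    obtain ⟨C, hC⟩ := hbdd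
    exact ae_le_essSup ⟨C, by rwa [Filter.eventually_map]⟩
  have hGMint : IntervalIntegrable
      (fun t => |(P m).eval t| * |Skernel a b x t| * M) volume a b :=
    hGint.mul_const M
  have hFabs : IntervalIntegrable
      (fun t => |(P m).eval t * Skernel a b x t * iteratedDeriv (m + 1) f t|) volume a b :=
    hFint.abs
  have hmono : (∫ t in a..b, |(P m).eval t * Skernel a b x t * iteratedDeriv (m + 1) f t|)
      ≤ ∫ t in a..b, |(P m).eval t| * |Skernel a b x t| * M := by
    refine intervalIntegral.integral_mono_ae_restrict hab' hFabs hGMint ?_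
    filter_upwards [hMae] with t ht
    rw [abs_mul, abs_mul]
    exact mul_le_mul_of_nonneg_left ht (by positivity)
  have hRbound : |∫ t in a..b, (P m).eval t * Skernel a b x t * iteratedDeriv (m + 1) f t|
      ≤ (∫ t in a..b, |(P m).eval t| * |Skernel a b x t|) * M := by
    calc |∫ t in a..b, (P m).eval t * Skernel a b x t * iteratedDeriv (m + 1) f t|
        ≤ ∫ t in a..b, |(P m).eval t * Skernel a b x t * iteratedDeriv (m + 1) f t| :=
          intervalIntegral.abs_integral_le_integral_abs hab'
      _ ≤ ∫ t in a..b, |(P m).eval t| * |Skernel a b x t| * M := hmono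
      _ = (∫ t in a..b, |(P m).eval t| * |Skernel a b x t|) * M := by
          rw [intervalIntegral.integral_mul_const]
  -- final computation
  have hLHS : (1 / ((m : ℝ) + 1)) * W - (1 / (b - a)) * ∫ t in a..b, f t
      = ((b - a) * W - ((m : ℝ) + 1) * ∫ t in a..b, f t) / (((m : ℝ) + 1) * (b - a)) := by
    field_simp
  have habsR : |∫ t in a..b, (P m).eval t * Skernel a b x t * iteratedDeriv (m + 1) f t|
      = |(b - a) * W - ((m : ℝ) + 1) * ∫ t in a..b, f t| := by
    rw [hRval, abs_mul, abs_pow, abs_neg, abs_one, one_pow, one_mul]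
    rw [show -((b - a) * W) + ((m : ℝ) + 1) * ∫ t in a..b, f t
      = -((b - a) * W - ((m : ℝ) + 1) * ∫ t in a..b, f t) by ring, abs_neg]
  have hcast : ((m + 1 : ℕ) : ℝ) = (m : ℝ) + 1 := by push_cast; ring
  rw [hcast, hLHS, abs_div, abs_of_pos (by positivity : (0:ℝ) < ((m : ℝ) + 1) * (b - a))]
  rw [div_le_iff₀ (by positivity : (0:ℝ) < ((m : ℝ) + 1) * (b - a))]
  rw [← habsR]
  calc |∫ t in a..b, (P m).eval t * Skernel a b x t * iteratedDeriv (m + 1) f t|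
      ≤ (∫ t in a..b, |(P m).eval t| * |Skernel a b x t|) * M := hRbound
    _ = 1 / (((m : ℝ) + 1) * (b - a)) *
          (∫ t in a..b, |(P m).eval t| * |Skernel a b x t|) * M * (((m : ℝ) + 1) * (b - a)) := by
        field_simp
end

section
/- Let n ≥ 1, let (P_k)_{k≥0} be a harmonic sequence of polynomials, let 1 ≤ p ≤ ∞ with conjugate exponent q (1/p + 1/q = 1), and let f be n-times differentiable on an open interval containing [a,b] with f^(n) absolutely continuous on [a,b] and f^(n) ∈ L^p[a,b]. Then for every x ∈ [a,(a+b)/2], | (1/n)·( (f(x)+f(a+b−x))/2 + Σ_{k=1}^{n−1} ( T_k(x) + F̃_k(a,b) ) ) − (1/(b−a))·∫_a^b f(y) dy | ≤ (1/n)·( 1/4 + |x−(3a+b)/4|/(b−a) )·‖P_{n−1}‖_{L^q[a,b]}·‖f^(n)‖_{L^p[a,b]}. -/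
open MeasureTheory Set
open scoped ENNReal

/-! ### Auxiliary lemmas -/

lemma iteratedDerivWithin_of_isOpen' {f : ℝ → ℝ} {s : Set ℝ} (hs : IsOpen s) (k : ℕ) :
    Set.EqOn (iteratedDerivWithin k f s) (iteratedDeriv k f) s := fun t ht => by
  rw [iteratedDerivWithin_eq_iteratedFDerivWithin, iteratedDeriv_eq_iteratedFDeriv,
    iteratedFDerivWithin_of_isOpen k hs ht]

lemma contOn_iteratedDeriv {N : ℕ} {f : ℝ → ℝ} {s : Set ℝ} (hs : IsOpen s)
    (hf : ContDiffOn ℝ (N : ℕ∞) f s) {k : ℕ} (hk : k ≤ N) :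
    ContinuousOn (iteratedDeriv k f) s :=
  (hf.continuousOn_iteratedDerivWithin (by exact_mod_cast hk) hs.uniqueDiffOn).congr
    (iteratedDerivWithin_of_isOpen' hs k).symm

lemma hasDerivAt_iteratedDeriv' {N : ℕ} {f : ℝ → ℝ} {s : Set ℝ} (hs : IsOpen s)
    (hf : ContDiffOn ℝ (N : ℕ∞) f s) {k : ℕ} (hk : k < N) {t : ℝ} (ht : t ∈ s) :
    HasDerivAt (iteratedDeriv k f) (iteratedDeriv (k + 1) f t) t := by
  have hd : DifferentiableOn ℝ (iteratedDerivWithin k f s) s :=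
    hf.differentiableOn_iteratedDerivWithin (by exact_mod_cast hk) hs.uniqueDiffOn
  have h1 : DifferentiableAt ℝ (iteratedDerivWithin k f s) t :=
    (hd t ht).differentiableAt (hs.mem_nhds ht)
  have heq : iteratedDerivWithin k f s =ᶠ[nhds t] iteratedDeriv k f :=
    Filter.eventuallyEq_of_mem (hs.mem_nhds ht) (iteratedDerivWithin_of_isOpen' hs k)
  have h2 : DifferentiableAt ℝ (iteratedDeriv k f) t := h1.congr_of_eventuallyEq heq.symm
  rw [iteratedDeriv_succ]
  exact h2.hasDerivAt

lemma Sbound {a b x : ℝ} (hax : a ≤ x) (hxm : x ≤ (a + b) / 2) :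
    ∀ t ∈ Icc a b, |Skernel a b x t| ≤ (b - a) / 4 + |x - (3 * a + b) / 4| := by
  intro t ht
  obtain ⟨hta, htb⟩ := ht
  have h1 : x - a ≤ (b - a) / 4 + |x - (3 * a + b) / 4| := by
    have := le_abs_self (x - (3 * a + b) / 4); linarith
  have h2 : (a + b) / 2 - x ≤ (b - a) / 4 + |x - (3 * a + b) / 4| := by
    have := neg_abs_le (x - (3 * a + b) / 4); linarith
  unfold Skernel
  split_ifs with hc1 hc2 <;> rw [abs_le] <;> constructor <;> linarith

/-- Piecewise integration by parts against the kernel `Skernel`. -/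
lemma SIBP {a b x : ℝ} (hax : a ≤ x) (hxm : x ≤ (a + b) / 2) {g g' : ℝ → ℝ}
    (hg : ∀ t ∈ Icc a b, HasDerivAt g (g' t) t)
    (hg' : ContinuousOn g' (Icc a b)) :
    ∫ t in a..b, Skernel a b x t * g' t
      = ((b - a) / 2) * (g x + g (a + b - x)) - ∫ t in a..b, g t := by
  have hab : a ≤ b := by linarith
  set y := a + b - x with hy
  have hxy : x ≤ y := by simp only [hy]; linarith
  have hyb : y ≤ b := by simp only [hy]; linarith
  have hgc : ContinuousOn g (Icc a b) := fun t ht => (hg t ht).continuousAt.continuousWithinAt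
  have piece : ∀ u v cc : ℝ, u ≤ v → Icc u v ⊆ Icc a b →
      ∫ t in u..v, (t - cc) * g' t
        = (v - cc) * g v - (u - cc) * g u - ∫ t in u..v, g t := by
    intro u v cc huv hsub
    have huIcc : uIcc u v = Icc u v := uIcc_of_le huv
    have h := intervalIntegral.integral_mul_deriv_eq_deriv_mul
      (u := fun t => t - cc) (u' := fun _ => (1 : ℝ)) (v := g) (v' := g')
      (fun t _ => (hasDerivAt_id t).sub_const cc)
      (fun t ht => hg t (hsub (huIcc ▸ ht)))
      intervalIntegrable_const
      ((hg'.mono (by rw [uIcc_of_le huv]; exact hsub)).intervalIntegrable)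
    simpa using h
  have hcong : ∀ u v : ℝ, u ≤ v → Icc u v ⊆ Icc a b → ∀ L : ℝ → ℝ, Continuous L →
      (∀ t ∈ Ioo u v, Skernel a b x t = L t) →
      IntervalIntegrable (fun t => Skernel a b x t * g' t) volume u v ∧
      (∫ t in u..v, Skernel a b x t * g' t) = ∫ t in u..v, L t * g' t := by
    intro u v huv hsub L hL hEq
    have hLg : IntervalIntegrable (fun t => L t * g' t) volume u v :=
      (hL.continuousOn.mul (hg'.mono (by rw [uIcc_of_le huv]; exact hsub))).intervalIntegrable
    have hv : ∀ᵐ t : ℝ, t ≠ v := by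
      rw [MeasureTheory.ae_iff]
      simpa using measure_singleton v
    have hae : ∀ᵐ t : ℝ, t ∈ Set.uIoc u v → Skernel a b x t * g' t = L t * g' t := by
      filter_upwards [hv] with t htv ht
      rw [uIoc_of_le huv] at ht
      rw [hEq t ⟨ht.1, lt_of_le_of_ne ht.2 htv⟩]
    constructor
    · rw [intervalIntegrable_iff] at hLg ⊢
      exact hLg.congr
        ((ae_restrict_iff' measurableSet_uIoc).mpr (hae.mono fun t h ht => (h ht).symm))
    · exact intervalIntegral.integral_congr_ae hae
  have hsub1 : Icc a x ⊆ Icc a b := Icc_subset_Icc le_rfl (le_trans hxy hyb)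
  have hsub2 : Icc x y ⊆ Icc a b := Icc_subset_Icc hax hyb
  have hsub3 : Icc y b ⊆ Icc a b := Icc_subset_Icc (le_trans hax hxy) le_rfl
  have c1 := hcong a x hax hsub1 (fun t => t - a) (by fun_prop)
    (fun t ht => by simp [Skernel, le_of_lt ht.2])
  have c2 := hcong x y hxy hsub2 (fun t => t - (a + b) / 2) (by fun_prop)
    (fun t ht => by
      have h1 : ¬ t ≤ x := not_le.mpr ht.1
      simp [Skernel, h1, ht.2]
      intro h
      exfalso
      linarith [ht.2])
  have c3 := hcong y b hyb hsub3 (fun t => t - b) (by fun_prop)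
    (fun t ht => by
      have h1 : ¬ t ≤ x := not_le.mpr (lt_of_le_of_lt hxy ht.1)
      have h2 : ¬ t < y := not_lt.mpr (le_of_lt ht.1)
      simp [Skernel, h1, h2]
      intro h
      exfalso
      linarith [not_lt.mp h2])
  have split : ∫ t in a..b, Skernel a b x t * g' t
      = (∫ t in a..x, Skernel a b x t * g' t) + (∫ t in x..y, Skernel a b x t * g' t)
        + (∫ t in y..b, Skernel a b x t * g' t) := by
    rw [intervalIntegral.integral_add_adjacent_intervals c1.1 c2.1,
      intervalIntegral.integral_add_adjacent_intervals (c1.1.trans c2.1) c3.1]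
  have splitg : ∫ t in a..b, g t
      = (∫ t in a..x, g t) + (∫ t in x..y, g t) + (∫ t in y..b, g t) := by
    have i1 : IntervalIntegrable g volume a x :=
      (hgc.mono (by rw [uIcc_of_le hax]; exact hsub1)).intervalIntegrable
    have i2 : IntervalIntegrable g volume x y :=
      (hgc.mono (by rw [uIcc_of_le hxy]; exact hsub2)).intervalIntegrable
    have i3 : IntervalIntegrable g volume y b :=
      (hgc.mono (by rw [uIcc_of_le hyb]; exact hsub3)).intervalIntegrable
    rw [intervalIntegral.integral_add_adjacent_intervals i1 i2,
      intervalIntegral.integral_add_adjacent_intervals (i1.trans i2) i3]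
  rw [split, c1.2, c2.2, c3.2, piece a x a hax hsub1, piece x y ((a + b) / 2) hxy hsub2,
    piece y b b hyb hsub3, splitg]
  simp only [hy]
  ring

lemma Smeasurable (a b x : ℝ) : Measurable (fun t => Skernel a b x t) := by
  unfold Skernel
  exact Measurable.ite (measurableSet_le measurable_id measurable_const)
    (measurable_id.sub measurable_const)
    (Measurable.ite (measurableSet_lt measurable_id measurable_const)
      (measurable_id.sub measurable_const) (measurable_id.sub measurable_const))

lemma Sabs_bound {a b x : ℝ} (hab : a ≤ b) : ∀ t ∈ Icc a b, |Skernel a b x t| ≤ b - a := by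
  intro t ht
  obtain ⟨hta, htb⟩ := ht
  unfold Skernel
  split_ifs with hc1 hc2 <;> rw [abs_le] <;> constructor <;> linarith

lemma Sintegrable {a b x : ℝ} (hab : a ≤ b) {h : ℝ → ℝ} (hh : ContinuousOn h (Icc a b)) :
    IntervalIntegrable (fun t => Skernel a b x t * h t) volume a b := by
  rw [intervalIntegrable_iff, uIoc_of_le hab]
  obtain ⟨C, hC⟩ := (isCompact_Icc (a := a) (b := b)).exists_bound_of_continuousOn hh
  haveI : IsFiniteMeasure (volume.restrict (Ioc a b)) :=
    ⟨by rw [Measure.restrict_apply_univ]; exact measure_Ioc_lt_top⟩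
  apply Integrable.mono' (integrable_const ((b - a) * C))
  · exact ((Smeasurable a b x).aestronglyMeasurable.mono_measure
      Measure.restrict_le_self).mul
      ((hh.mono Ioc_subset_Icc_self).aestronglyMeasurable measurableSet_Ioc)
  · refine (ae_restrict_mem measurableSet_Ioc).mono fun t ht => ?_
    have ht' : t ∈ Icc a b := Ioc_subset_Icc_self ht
    have h1 := Sabs_bound (x := x) hab t ht'
    have h2 := hC t ht'
    have h3 : (0:ℝ) ≤ |Skernel a b x t| := abs_nonneg _
    calc ‖Skernel a b x t * h t‖ = |Skernel a b x t| * ‖h t‖ := by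
          rw [norm_mul]; rfl
      _ ≤ (b - a) * C := mul_le_mul h1 h2 (norm_nonneg _) (by linarith)

lemma Asum {P : ℕ → Polynomial ℝ} (hP : HarmonicSeq P) {f : ℝ → ℝ} {a b c d : ℝ}
    (hab : a ≤ b) (hca : c < a) (hbd : b < d)
    {N : ℕ} (hf : ContDiffOn ℝ (N : ℕ∞) f (Set.Ioo c d)) {m : ℕ} (hm : m ≤ N) :
    (-1 : ℝ) ^ m * ∫ t in a..b, (P m).eval t * iteratedDeriv m f t
      = (∫ t in a..b, f t) - ∑ k ∈ Finset.Icc 1 m, (-1 : ℝ) ^ k *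
          ((P k).eval a * iteratedDeriv (k - 1) f a
            - (P k).eval b * iteratedDeriv (k - 1) f b) := by
  have hIcc : Icc a b ⊆ Ioo c d := fun t ht => ⟨lt_of_lt_of_le hca ht.1, lt_of_le_of_lt ht.2 hbd⟩
  have huIcc : uIcc a b = Icc a b := uIcc_of_le hab
  induction m with
  | zero => simp [hP.1]
  | succ m ih =>
    have hm' : m ≤ N := Nat.le_of_succ_le hm
    have ibp := intervalIntegral.integral_mul_deriv_eq_deriv_mul
      (u := fun t => (P (m + 1)).eval t) (u' := fun t => (P m).eval t)
      (v := iteratedDeriv m f) (v' := iteratedDeriv (m + 1) f)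
      (fun t _ => by simpa [hP.2 m] using (P (m + 1)).hasDerivAt t)
      (fun t ht => hasDerivAt_iteratedDeriv' isOpen_Ioo hf (by omega) (hIcc (huIcc ▸ ht)))
      ((P m).continuous_aeval.continuousOn.intervalIntegrable)
      (((contOn_iteratedDeriv isOpen_Ioo hf hm).mono
        (fun t ht => hIcc (huIcc ▸ ht))).intervalIntegrable)
    beta_reduce at ibp
    rw [Finset.sum_Icc_succ_top (by omega : 1 ≤ m + 1)]
    simp only [Nat.add_sub_cancel, pow_succ]
    linear_combination ih hm' - ((-1 : ℝ) ^ m) * ibp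

lemma key {P : ℕ → Polynomial ℝ} (hP : HarmonicSeq P) {f : ℝ → ℝ} {a b c d x : ℝ}
    (hab : a < b) (hca : c < a) (hbd : b < d) (hax : a ≤ x) (hxm : x ≤ (a + b) / 2)
    (m : ℕ) (hf : ContDiffOn ℝ ((m + 1 : ℕ) : ℕ∞) f (Set.Ioo c d)) :
    (f x + f (a + b - x)) / 2 +
        ∑ k ∈ Finset.Icc 1 m, (Tterm P f a b x k + Ftilde P f (m + 1) a b k)
      = (((m : ℝ) + 1) / (b - a)) * (∫ t in a..b, f t)
        + ((-1 : ℝ) ^ m / (b - a)) *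
            ∫ t in a..b, Skernel a b x t * ((P m).eval t * iteratedDeriv (m + 1) f t) := by
  have hIcc : Icc a b ⊆ Ioo c d := fun t ht => ⟨lt_of_lt_of_le hca ht.1, lt_of_le_of_lt ht.2 hbd⟩
  have hba : b - a ≠ 0 := by linarith
  induction m with
  | zero =>
    have hg : ∀ t ∈ Icc a b, HasDerivAt f (iteratedDeriv 1 f t) t := by
      intro t ht
      have := hasDerivAt_iteratedDeriv' isOpen_Ioo hf (Nat.lt_succ_self 0) (hIcc ht)
      rwa [iteratedDeriv_zero] at this
    have hg' : ContinuousOn (iteratedDeriv 1 f) (Icc a b) :=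
      (contOn_iteratedDeriv isOpen_Ioo hf le_rfl).mono hIcc
    have hS := SIBP hax hxm hg hg'
    have hcongr : (∫ t in a..b, Skernel a b x t * ((P 0).eval t * iteratedDeriv (0 + 1) f t))
        = ∫ t in a..b, Skernel a b x t * iteratedDeriv 1 f t := by
      simp [hP.1]
    simp only [Finset.Icc_eq_empty_of_lt (by norm_num : (1:ℕ) > 0), Finset.sum_empty, add_zero,
      Nat.cast_zero, pow_zero, hcongr]
    rw [hS]
    field_simp
    ring
  | succ m ih =>
    have hf' : ContDiffOn ℝ ((m + 1 : ℕ) : ℕ∞) f (Set.Ioo c d) :=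
      hf.of_le (by exact_mod_cast Nat.le_succ (m + 1))
    have ih' := ih hf'
    have hcontF1 : ContinuousOn (iteratedDeriv (m + 1) f) (Icc a b) :=
      (contOn_iteratedDeriv isOpen_Ioo hf (by omega)).mono hIcc
    have hcontF2 : ContinuousOn (iteratedDeriv (m + 2) f) (Icc a b) :=
      (contOn_iteratedDeriv isOpen_Ioo hf le_rfl).mono hIcc
    have hu : ContinuousOn (fun t => (P m).eval t * iteratedDeriv (m + 1) f t) (Icc a b) :=
      ((P m).continuous_aeval.continuousOn).mul hcontF1
    have hv : ContinuousOn (fun t => (P (m + 1)).eval t * iteratedDeriv (m + 2) f t) (Icc a b) :=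
      ((P (m + 1)).continuous_aeval.continuousOn).mul hcontF2
    have hg : ∀ t ∈ Icc a b,
        HasDerivAt (fun t => (P (m + 1)).eval t * iteratedDeriv (m + 1) f t)
          ((P m).eval t * iteratedDeriv (m + 1) f t
            + (P (m + 1)).eval t * iteratedDeriv (m + 2) f t) t := by
      intro t ht
      have h1 : HasDerivAt (fun t => (P (m + 1)).eval t * iteratedDeriv (m + 1) f t) _ t :=
        ((P (m + 1)).hasDerivAt t).mul
        (hasDerivAt_iteratedDeriv' isOpen_Ioo hf (Nat.lt_succ_self (m+1)) (hIcc ht))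
      rw [hP.2 m] at h1
      exact h1
    have hS := SIBP hax hxm hg (hu.add hv)
    have hsplit : (∫ t in a..b, Skernel a b x t *
          ((P m).eval t * iteratedDeriv (m + 1) f t
            + (P (m + 1)).eval t * iteratedDeriv (m + 2) f t))
        = (∫ t in a..b, Skernel a b x t * ((P m).eval t * iteratedDeriv (m + 1) f t))
          + ∫ t in a..b, Skernel a b x t * ((P (m + 1)).eval t * iteratedDeriv (m + 2) f t) := by
      simp only [mul_add]
      exact intervalIntegral.integral_add (Sintegrable hab.le hu) (Sintegrable hab.le hv)
    rw [hsplit] at hS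
    have hA := Asum hP hab.le hca hbd hf (Nat.le_succ (m + 1))
    rw [Finset.sum_Icc_succ_top (by omega : 1 ≤ m + 1)] at hA
    rw [Finset.sum_Icc_succ_top (by omega : 1 ≤ m + 1)]
    have hsum2 : ∑ k ∈ Finset.Icc 1 m, (Tterm P f a b x k + Ftilde P f (m + 2) a b k)
        = (∑ k ∈ Finset.Icc 1 m, (Tterm P f a b x k + Ftilde P f (m + 1) a b k))
          + (∑ k ∈ Finset.Icc 1 m, (-1 : ℝ) ^ k *
              ((P k).eval a * iteratedDeriv (k - 1) f a
                - (P k).eval b * iteratedDeriv (k - 1) f b)) / (b - a) := by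
      rw [Finset.sum_div, ← Finset.sum_add_distrib]
      refine Finset.sum_congr rfl fun k _ => ?_
      unfold Ftilde
      push_cast
      field_simp
      ring
    rw [hsum2]
    simp only [Nat.add_sub_cancel] at hA
    have hT : Tterm P f a b x (m + 1) = ((-1 : ℝ) ^ (m + 1) / 2) *
        ((P (m + 1)).eval x * iteratedDeriv (m + 1) f x +
          (P (m + 1)).eval (a + b - x) * iteratedDeriv (m + 1) f (a + b - x)) := rfl
    have hF : Ftilde P f (m + 1 + 1) a b (m + 1)
        = ((-1 : ℝ) ^ (m + 1) * (((m + 1 + 1 : ℕ) : ℝ) - ((m + 1 : ℕ) : ℝ)) / (b - a)) *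
          ((P (m + 1)).eval a * iteratedDeriv m f a - (P (m + 1)).eval b * iteratedDeriv m f b) :=
      rfl
    push_cast at hF ⊢
    have hinv : (b - a) * (b - a)⁻¹ = 1 := mul_inv_cancel₀ hba
    linear_combination ih' + (((-1 : ℝ) ^ m) / (b - a)) * hS + (1 / (b - a)) * hA + hT + hF
      + (((-1 : ℝ) ^ m) * ((P (m + 1)).eval x * iteratedDeriv (m + 1) f x +
          (P (m + 1)).eval (a + b - x) * iteratedDeriv (m + 1) f (a + b - x)) / 2) * hinv

theorem stmt_15 (n : ℕ) (hn : 1 ≤ n) (P : ℕ → Polynomial ℝ) (hP : HarmonicSeq P)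
    (p q : ℝ≥0∞) (hpq : p.HolderConjugate q)
    (a b c d : ℝ) (hab : a < b) (hca : c < a) (hbd : b < d) (f : ℝ → ℝ)
    (hf : ContDiffOn ℝ (n : ℕ∞) f (Set.Ioo c d))
    (hAC : AbsCont (iteratedDeriv n f) a b)
    (hLp : MemLp (iteratedDeriv n f) p (MeasureTheory.volume.restrict (Set.Icc a b)))
    (x : ℝ) (hx : x ∈ Set.Icc a ((a + b) / 2)) :
    |(1 / (n : ℝ)) *
          ((f x + f (a + b - x)) / 2 +
            ∑ k ∈ Finset.Icc 1 (n - 1), (Tterm P f a b x k + Ftilde P f n a b k))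
        - (1 / (b - a)) * ∫ y in a..b, f y|
      ≤ (1 / (n : ℝ)) * (1 / 4 + |x - (3 * a + b) / 4| / (b - a)) *
          (eLpNorm (fun t => (P (n - 1)).eval t) q
              (MeasureTheory.volume.restrict (Set.Icc a b))).toReal *
          (eLpNorm (iteratedDeriv n f) p
              (MeasureTheory.volume.restrict (Set.Icc a b))).toReal := by
  obtain ⟨hax, hxm⟩ := hx
  obtain ⟨m, rfl⟩ : ∃ m, n = m + 1 := ⟨n - 1, (Nat.succ_pred_eq_of_pos hn).symm⟩
  simp only [Nat.add_sub_cancel]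
  have hIcc : Icc a b ⊆ Ioo c d := fun t ht => ⟨lt_of_lt_of_le hca ht.1, lt_of_le_of_lt ht.2 hbd⟩
  have hba : b - a ≠ 0 := by linarith
  have hba' : (0:ℝ) < b - a := by linarith
  have hm1 : ((m : ℝ) + 1) ≠ 0 := by positivity
  set μ := MeasureTheory.volume.restrict (Set.Icc a b) with hμ
  haveI : IsFiniteMeasure μ := ⟨by rw [Measure.restrict_apply_univ]; exact measure_Icc_lt_top⟩
  have hkey := key hP hab hca hbd hax hxm m hf
  set J := ∫ t in a..b, Skernel a b x t * ((P m).eval t * iteratedDeriv (m + 1) f t) with hJ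
  set M := (b - a) / 4 + |x - (3 * a + b) / 4| with hM
  have hMnn : 0 ≤ M := by positivity
  -- rewrite the left-hand side
  have step1 : (1 / ((m + 1 : ℕ) : ℝ)) *
        ((f x + f (a + b - x)) / 2 +
          ∑ k ∈ Finset.Icc 1 m, (Tterm P f a b x k + Ftilde P f (m + 1) a b k))
        - (1 / (b - a)) * ∫ y in a..b, f y
      = ((-1 : ℝ) ^ m / (((m : ℝ) + 1) * (b - a))) * J := by
    rw [hkey]
    push_cast
    field_simp
    ring
  rw [step1, abs_mul, abs_div, abs_pow, abs_neg, abs_one, one_pow,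
    abs_of_pos (show (0:ℝ) < ((m : ℝ) + 1) * (b - a) by positivity)]
  -- continuity facts
  have hcontF : ContinuousOn (iteratedDeriv (m + 1) f) (Icc a b) :=
    (contOn_iteratedDeriv isOpen_Ioo hf le_rfl).mono hIcc
  have hPF : ContinuousOn (fun t => (P m).eval t * iteratedDeriv (m + 1) f t) (Icc a b) :=
    ((P m).continuous_aeval.continuousOn).mul hcontF
  have hPFasm : AEStronglyMeasurable (fun t => (P m).eval t * iteratedDeriv (m + 1) f t) μ :=
    hPF.aestronglyMeasurable measurableSet_Icc
  -- `|J| ≤ M * ∫ |P·f⁽ᵐ⁺¹⁾|`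
  have h1 : |J| ≤ ∫ t in a..b, |Skernel a b x t * ((P m).eval t * iteratedDeriv (m + 1) f t)| :=
    intervalIntegral.abs_integral_le_integral_abs hab.le
  have h2 : (∫ t in a..b, |Skernel a b x t * ((P m).eval t * iteratedDeriv (m + 1) f t)|)
      ≤ ∫ t in a..b, M * |(P m).eval t * iteratedDeriv (m + 1) f t| := by
    refine intervalIntegral.integral_mono_on hab.le ((Sintegrable hab.le hPF).abs)
      (ContinuousOn.intervalIntegrable
        (by rw [uIcc_of_le hab.le]; exact continuousOn_const.mul hPF.abs))
      fun t ht => ?_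
    rw [abs_mul]
    exact mul_le_mul_of_nonneg_right (Sbound hax hxm t ht) (abs_nonneg _)
  have h3 : (∫ t in a..b, M * |(P m).eval t * iteratedDeriv (m + 1) f t|)
      = M * ∫ t in a..b, |(P m).eval t * iteratedDeriv (m + 1) f t| :=
    intervalIntegral.integral_const_mul _ _
  have h4 : (∫ t in a..b, |(P m).eval t * iteratedDeriv (m + 1) f t|)
      = ∫ t, ‖(P m).eval t * iteratedDeriv (m + 1) f t‖ ∂μ := by
    rw [hμ, intervalIntegral.integral_of_le hab.le, ← integral_Icc_eq_integral_Ioc]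
    simp only [Real.norm_eq_abs]
  have h5 : (∫ t, ‖(P m).eval t * iteratedDeriv (m + 1) f t‖ ∂μ)
      = (eLpNorm (fun t => (P m).eval t * iteratedDeriv (m + 1) f t) 1 μ).toReal := by
    rw [eLpNorm_one_eq_lintegral_enorm, integral_norm_eq_lintegral_enorm hPFasm]
  -- Hölder
  have hPasm : AEStronglyMeasurable (fun t => (P m).eval t) μ :=
    (P m).continuous_aeval.aestronglyMeasurable
  have hpqr : (1 : ℝ≥0∞) / 1 = 1 / q + 1 / p := by
    rw [one_div, inv_one, one_div, one_div, add_comm]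
    exact (ENNReal.holderConjugate_iff.mp hpq).symm
  have hHolder : eLpNorm (fun t => (P m).eval t * iteratedDeriv (m + 1) f t) 1 μ
      ≤ eLpNorm (fun t => (P m).eval t) q μ * eLpNorm (iteratedDeriv (m + 1) f) p μ := by
    haveI : ENNReal.HolderConjugate q p := ENNReal.HolderConjugate.symm (hpq := hpq)
    have := eLpNorm_le_eLpNorm_mul_eLpNorm'_of_norm (p := q) (q := p) (r := 1) hPasm hLp.1 (· * ·) 1
      (Filter.Eventually.of_forall fun t => by simp [norm_mul])
    simpa using this
  have hPmem : MemLp (fun t => (P m).eval t) q μ := by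
    obtain ⟨C, hC⟩ := (isCompact_Icc (a := a) (b := b)).exists_bound_of_continuousOn
      ((P m).continuous_aeval.continuousOn)
    refine (memLp_top_of_bound hPasm C ?_).mono_exponent le_top
    exact (ae_restrict_mem measurableSet_Icc).mono fun t ht => hC t ht
  have hfin : eLpNorm (fun t => (P m).eval t) q μ * eLpNorm (iteratedDeriv (m + 1) f) p μ ≠ ⊤ :=
    ENNReal.mul_ne_top hPmem.2.ne hLp.2.ne
  have h6 : (eLpNorm (fun t => (P m).eval t * iteratedDeriv (m + 1) f t) 1 μ).toReal
      ≤ (eLpNorm (fun t => (P m).eval t) q μ).toReal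
        * (eLpNorm (iteratedDeriv (m + 1) f) p μ).toReal := by
    rw [← ENNReal.toReal_mul]
    exact ENNReal.toReal_mono hfin hHolder
  have hchain : |J| ≤ M * ((eLpNorm (fun t => (P m).eval t) q μ).toReal
      * (eLpNorm (iteratedDeriv (m + 1) f) p μ).toReal) := by
    calc |J| ≤ ∫ t in a..b, |Skernel a b x t * ((P m).eval t * iteratedDeriv (m + 1) f t)| := h1
      _ ≤ ∫ t in a..b, M * |(P m).eval t * iteratedDeriv (m + 1) f t| := h2
      _ = M * ∫ t in a..b, |(P m).eval t * iteratedDeriv (m + 1) f t| := h3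
      _ = M * (eLpNorm (fun t => (P m).eval t * iteratedDeriv (m + 1) f t) 1 μ).toReal := by
          rw [h4, h5]
      _ ≤ M * ((eLpNorm (fun t => (P m).eval t) q μ).toReal
          * (eLpNorm (iteratedDeriv (m + 1) f) p μ).toReal) :=
          mul_le_mul_of_nonneg_left h6 hMnn
  calc 1 / (((m : ℝ) + 1) * (b - a)) * |J|
      ≤ 1 / (((m : ℝ) + 1) * (b - a)) * (M * ((eLpNorm (fun t => (P m).eval t) q μ).toReal
          * (eLpNorm (iteratedDeriv (m + 1) f) p μ).toReal)) :=
        mul_le_mul_of_nonneg_left hchain (by positivity)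
    _ = 1 / ((m + 1 : ℕ) : ℝ) * (1 / 4 + |x - (3 * a + b) / 4| / (b - a)) *
          (eLpNorm (fun t => (P m).eval t) q μ).toReal *
          (eLpNorm (iteratedDeriv (m + 1) f) p μ).toReal := by
        rw [hM]
        push_cast
        field_simp
end

section
/- Let n ≥ 2, let (P_k)_{k≥0} be a harmonic sequence of polynomials, and let f be (n+1)-times differentiable on an open interval containing [a,b] with f^(n+1) absolutely continuous on [a,b]. Suppose m₁ ≤ f^(n)(t) ≤ M₁ for all t ∈ [a,b], and set M₂ = max_{t∈[a,b]} P_{n−1}(t)·S(t,x) and m₂ = min_{t∈[a,b]} P_{n−1}(t)·S(t,x). Then for every x ∈ [a,(a+b)/2], |L(f,P_n,x)| ≤ (1/(4n))·(M₁ − m₁)·(M₂ − m₂). -/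
open MeasureTheory Set

/-- The functional `ℒ(f, P_n, x)` of the Chebyshev–Grüss section. -/
noncomputable def Lfun (P : ℕ → Polynomial ℝ) (f : ℝ → ℝ) (n : ℕ) (a b x : ℝ) : ℝ :=
  ((-1 : ℝ) ^ (n - 1) / ((n : ℝ) * (b - a))) *
      (∫ t in a..b, (P (n - 1)).eval t * Skernel a b x t * iteratedDeriv n f t)
    - (((P n).eval x + (P n).eval (a + b - x)) / 2 -
        ((P (n + 1)).eval b - (P (n + 1)).eval a) / (b - a)) *
        ((-1 : ℝ) ^ (n - 1) / n) *
        ((iteratedDeriv (n - 1) f b - iteratedDeriv (n - 1) f a) / (b - a))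

/-- iterated derivatives of a `C^{m+k}` function on an open set are `C^k` there. -/
lemma auxIter {s : Set ℝ} (hs : IsOpen s) :
    ∀ (m k : ℕ) (f : ℝ → ℝ), ContDiffOn ℝ ((m + k : ℕ) : ℕ∞) f s →
      ContDiffOn ℝ ((k : ℕ) : ℕ∞) (iteratedDeriv m f) s := by
  intro m
  induction m with
  | zero => intro k f hf; simpa using hf
  | succ m ih =>
    intro k f hf
    rw [iteratedDeriv_succ']
    refine ih k (deriv f) (hf.deriv_of_isOpen hs ?_)
    norm_cast
    omega

/-- Antiderivative of `P_{n-1}(t)·(t-c)` for a harmonic sequence. -/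
lemma auxAnti (P : ℕ → Polynomial ℝ) (hP : HarmonicSeq P) (n : ℕ) (hn : 1 ≤ n) (c t : ℝ) :
    HasDerivAt (fun u => (P n).eval u * (u - c) - (P (n + 1)).eval u)
      ((P (n - 1)).eval t * (t - c)) t := by
  have e1 : (P n).derivative = P (n - 1) := by
    conv_lhs => rw [show n = (n - 1) + 1 by omega]
    exact hP.2 (n - 1)
  have h1 : HasDerivAt (fun u => (P n).eval u) ((P (n - 1)).eval t) t := by
    simpa [e1] using (P n).hasDerivAt t
  have h2 : HasDerivAt (fun u : ℝ => u - c) 1 t := (hasDerivAt_id t).sub_const c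
  have h3 : HasDerivAt (fun u => (P (n + 1)).eval u) ((P n).eval t) t := by
    simpa [hP.2 n] using (P (n + 1)).hasDerivAt t
  have : HasDerivAt (fun u => (P n).eval u * (u - c) - (P (n + 1)).eval u)
      ((P (n - 1)).eval t * (t - c) + (P n).eval t * 1 - (P n).eval t) t := (h1.mul h2).sub h3
  convert this using 1
  ring

set_option maxHeartbeats 1000000
theorem stmt_17 (n : ℕ) (hn : 2 ≤ n) (P : ℕ → Polynomial ℝ) (hP : HarmonicSeq P)
    (a b c d : ℝ) (hab : a < b) (hca : c < a) (hbd : b < d) (f : ℝ → ℝ)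
    (hf : ContDiffOn ℝ ((n + 1 : ℕ) : ℕ∞) f (Set.Ioo c d))
    (hAC : AbsCont (iteratedDeriv (n + 1) f) a b)
    (m₁ M₁ : ℝ)
    (hmM : ∀ t ∈ Set.Icc a b, m₁ ≤ iteratedDeriv n f t ∧ iteratedDeriv n f t ≤ M₁)
    (x : ℝ) (hx : x ∈ Set.Icc a ((a + b) / 2))
    (m₂ M₂ : ℝ)
    (hM₂ : M₂ = sSup ((fun t => (P (n - 1)).eval t * Skernel a b x t) '' Set.Icc a b))
    (hm₂ : m₂ = sInf ((fun t => (P (n - 1)).eval t * Skernel a b x t) '' Set.Icc a b)) :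
    |Lfun P f n a b x| ≤ (1 / (4 * (n : ℝ))) * (M₁ - m₁) * (M₂ - m₂) := by
  obtain ⟨hax, hxm⟩ := hx
  have hba : (0:ℝ) < b - a := by linarith
  have hne : b - a ≠ 0 := ne_of_gt hba
  have hxb : x ≤ a + b - x := by linarith
  have hyb : a + b - x ≤ b := by linarith
  have hicc : Set.Icc a b ⊆ Set.Ioo c d := fun t ht =>
    ⟨lt_of_lt_of_le hca ht.1, lt_of_le_of_lt ht.2 hbd⟩
  have hnR : (0:ℝ) < (n:ℝ) := by exact_mod_cast Nat.lt_of_lt_of_le Nat.zero_lt_two hn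
  set g : ℝ → ℝ := fun t => (P (n - 1)).eval t * Skernel a b x t with hgdef
  set h : ℝ → ℝ := fun t => iteratedDeriv n f t with hhdef
  have hmM' : ∀ t ∈ Set.Icc a b, m₁ ≤ h t ∧ h t ≤ M₁ := hmM
  -- smoothness facts
  have hopen : IsOpen (Set.Ioo c d) := isOpen_Ioo
  have hcont_h : ContinuousOn h (Set.Icc a b) := by
    have h1 : ContDiffOn ℝ ((1:ℕ) : ℕ∞) (iteratedDeriv n f) (Set.Ioo c d) :=
      auxIter hopen n 1 f hf
    exact h1.continuousOn.mono hicc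
  have hdiff : ∀ t ∈ Set.Icc a b, HasDerivAt (iteratedDeriv (n - 1) f) (h t) t := by
    intro t ht
    have h1 : ContDiffOn ℝ ((2:ℕ) : ℕ∞) (iteratedDeriv (n - 1) f) (Set.Ioo c d) := by
      refine auxIter hopen (n - 1) 2 f ?_
      have e : n - 1 + 2 = n + 1 := by omega
      rw [e]
      exact hf
    have h2 : DifferentiableAt ℝ (iteratedDeriv (n - 1) f) t :=
      (h1.differentiableOn (by norm_num)).differentiableAt (hopen.mem_nhds (hicc ht))
    have h3 := h2.hasDerivAt
    have h4 : iteratedDeriv n f = deriv (iteratedDeriv (n - 1) f) := by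
      conv_lhs => rw [show n = (n - 1) + 1 from by omega]
      rw [iteratedDeriv_succ]
    rwa [← h4] at h3
  have hint_h : IntervalIntegrable h volume a b := hcont_h.intervalIntegrable_of_Icc hab.le
  have hHh : ∫ t in a..b, h t = iteratedDeriv (n - 1) f b - iteratedDeriv (n - 1) f a := by
    refine intervalIntegral.integral_eq_sub_of_hasDerivAt (fun t ht => ?_) hint_h
    exact hdiff t (by rwa [Set.uIcc_of_le hab.le] at ht)
  -- measurability and bounds for g
  have hSmeas : Measurable (fun t => Skernel a b x t) := by
    unfold Skernel
    exact Measurable.ite (measurableSet_le measurable_id measurable_const)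
      (measurable_id.sub measurable_const)
      (Measurable.ite (measurableSet_lt measurable_id measurable_const)
        (measurable_id.sub measurable_const) (measurable_id.sub measurable_const))
  have hgmeas : Measurable g := ((P (n - 1)).continuous).measurable.mul hSmeas
  obtain ⟨K, hK⟩ : ∃ K, ∀ t ∈ Set.Icc a b, ‖(P (n - 1)).eval t‖ ≤ K :=
    IsCompact.exists_bound_of_continuousOn isCompact_Icc ((P (n - 1)).continuous).continuousOn
  have hSb : ∀ t ∈ Set.Icc a b, |Skernel a b x t| ≤ b - a := by
    intro t ht
    unfold Skernel
    split_ifs <;> (rw [abs_le]; exact ⟨by linarith [ht.1, ht.2], by linarith [ht.1, ht.2]⟩)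
  have hK0 : 0 ≤ K := le_trans (norm_nonneg _) (hK a ⟨le_rfl, hab.le⟩)
  have hgb : ∀ t ∈ Set.Icc a b, |g t| ≤ K * (b - a) := by
    intro t ht
    rw [hgdef]
    simp only []
    rw [abs_mul]
    exact mul_le_mul (by simpa [Real.norm_eq_abs] using hK t ht) (hSb t ht) (abs_nonneg _) hK0
  have hgint : IntervalIntegrable g volume a b := by
    rw [intervalIntegrable_iff_integrableOn_Icc_of_le hab.le]
    apply Measure.integrableOn_of_bounded (M := K * (b - a)) measure_Icc_lt_top.ne
      hgmeas.aestronglyMeasurable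
    exact (ae_restrict_iff' measurableSet_Icc).2 (Filter.Eventually.of_forall
      (fun t ht => by simpa [Real.norm_eq_abs] using hgb t ht))
  have hhb : ∀ t ∈ Set.Icc a b, |h t| ≤ |m₁| + |M₁| := by
    intro t ht
    obtain ⟨l, u⟩ := hmM' t ht
    rw [abs_le]
    constructor
    · linarith [neg_abs_le m₁, abs_nonneg M₁]
    · linarith [le_abs_self M₁, abs_nonneg m₁]
  have hghint : IntervalIntegrable (fun t => g t * h t) volume a b := by
    rw [intervalIntegrable_iff_integrableOn_Icc_of_le hab.le]
    refine ⟨(hgmeas.aestronglyMeasurable.restrict).mul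
      (hcont_h.aestronglyMeasurable measurableSet_Icc), ?_⟩
    refine HasFiniteIntegral.restrict_of_bounded (C := K * (b - a) * (|m₁| + |M₁|))
      measure_Icc_lt_top ?_
    refine (ae_restrict_iff' measurableSet_Icc).2 (Filter.Eventually.of_forall fun t ht => ?_)
    rw [Real.norm_eq_abs, abs_mul]
    exact mul_le_mul (hgb t ht) (hhb t ht) (abs_nonneg _)
      (mul_nonneg hK0 hba.le)
  -- key integral computations
  set G : ℝ := ((P n).eval x + (P n).eval (a + b - x)) / 2 -
      ((P (n + 1)).eval b - (P (n + 1)).eval a) / (b - a) with hGdef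
  have hn1 : 1 ≤ n := by omega
  have i_g1 : IntervalIntegrable g volume a x := by
    refine hgint.mono_set ?_
    rw [uIcc_of_le hax, uIcc_of_le hab.le]
    exact Icc_subset_Icc le_rfl (by linarith)
  have i_g2 : IntervalIntegrable g volume x (a + b - x) := by
    refine hgint.mono_set ?_
    rw [uIcc_of_le hxb, uIcc_of_le hab.le]
    exact Icc_subset_Icc hax hyb
  have i_g3 : IntervalIntegrable g volume (a + b - x) b := by
    refine hgint.mono_set ?_
    rw [uIcc_of_le hyb, uIcc_of_le hab.le]
    exact Icc_subset_Icc (by linarith) le_rfl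
  have p1 : ∫ t in a..x, g t =
      ((P n).eval x * (x - a) - (P (n + 1)).eval x) -
      ((P n).eval a * (a - a) - (P (n + 1)).eval a) := by
    have e : ∫ t in a..x, g t = ∫ t in a..x, (P (n - 1)).eval t * (t - a) := by
      refine intervalIntegral.integral_congr fun t ht => ?_
      rw [uIcc_of_le hax] at ht
      rw [hgdef]
      simp only [Skernel, if_pos ht.2]
    rw [e]
    exact intervalIntegral.integral_eq_sub_of_hasDerivAt
      (fun t _ => auxAnti P hP n hn1 a t)
      (((P (n - 1)).continuous.mul (continuous_id.sub continuous_const)).intervalIntegrable _ _)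
  have p2 : ∫ t in x..(a + b - x), g t =
      ((P n).eval (a + b - x) * ((a + b - x) - (a + b) / 2) - (P (n + 1)).eval (a + b - x)) -
      ((P n).eval x * (x - (a + b) / 2) - (P (n + 1)).eval x) := by
    have e : ∫ t in x..(a + b - x), g t =
        ∫ t in x..(a + b - x), (P (n - 1)).eval t * (t - (a + b) / 2) := by
      refine intervalIntegral.integral_congr_ae ?_
      have h0 : (volume : Measure ℝ) {a + b - x} = 0 := measure_singleton _
      filter_upwards [compl_mem_ae_iff.2 h0] with t ht hmem
      rw [Set.uIoc_of_le hxb] at hmem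
      have h1 : ¬ t ≤ x := not_le.2 hmem.1
      have h2 : t < a + b - x := lt_of_le_of_ne hmem.2 (by simpa using ht)
      rw [hgdef]
      simp only [Skernel, if_neg h1, if_pos h2]
    rw [e]
    exact intervalIntegral.integral_eq_sub_of_hasDerivAt
      (fun t _ => auxAnti P hP n hn1 ((a + b) / 2) t)
      (((P (n - 1)).continuous.mul (continuous_id.sub continuous_const)).intervalIntegrable _ _)
  have p3 : ∫ t in (a + b - x)..b, g t =
      ((P n).eval b * (b - b) - (P (n + 1)).eval b) -
      ((P n).eval (a + b - x) * ((a + b - x) - b) - (P (n + 1)).eval (a + b - x)) := by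
    have e : ∫ t in (a + b - x)..b, g t =
        ∫ t in (a + b - x)..b, (P (n - 1)).eval t * (t - b) := by
      refine intervalIntegral.integral_congr_ae (Filter.Eventually.of_forall fun t hmem => ?_)
      rw [Set.uIoc_of_le hyb] at hmem
      have h1 : ¬ t ≤ x := not_le.2 (lt_of_le_of_lt hxb hmem.1)
      have h2 : ¬ t < a + b - x := not_lt.2 hmem.1.le
      rw [hgdef]
      simp only [Skernel, if_neg h1, if_neg h2]
    rw [e]
    exact intervalIntegral.integral_eq_sub_of_hasDerivAt
      (fun t _ => auxAnti P hP n hn1 b t)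
      (((P (n - 1)).continuous.mul (continuous_id.sub continuous_const)).intervalIntegrable _ _)
  have hA : ∫ t in a..b, g t = (b - a) * G := by
    have e1 := intervalIntegral.integral_add_adjacent_intervals i_g1 i_g2
    have e2 := intervalIntegral.integral_add_adjacent_intervals (i_g1.trans i_g2) i_g3
    rw [← e2, ← e1, p1, p2, p3, hGdef]
    field_simp
    ring
  set B : ℝ := ∫ t in a..b, h t with hBdef
  set μ : ℝ := B / (b - a) with hμdef
  set A : ℝ := ∫ t in a..b, g t with hAdef
  have hμB : B = μ * (b - a) := by rw [hμdef]; field_simp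
  have hBlo : m₁ * (b - a) ≤ B := by
    have := intervalIntegral.integral_mono_on hab.le (intervalIntegrable_const (c := m₁)) hint_h
      (fun t ht => (hmM' t ht).1)
    simpa [smul_eq_mul, mul_comm] using this
  have hBhi : B ≤ M₁ * (b - a) := by
    have := intervalIntegral.integral_mono_on hab.le hint_h (intervalIntegrable_const (c := M₁))
      (fun t ht => (hmM' t ht).2)
    simpa [smul_eq_mul, mul_comm] using this
  have hμlo : m₁ ≤ μ := by rw [hμdef, le_div_iff₀ hba]; linarith
  have hμhi : μ ≤ M₁ := by rw [hμdef, div_le_iff₀ hba]; linarith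
  have hm₁M₁ : m₁ ≤ M₁ := le_trans hμlo hμhi
  -- m₂ M₂ bounds
  have hbddA : BddAbove (g '' Set.Icc a b) := by
    refine ⟨K * (b - a), ?_⟩
    rintro y ⟨t, ht, rfl⟩
    exact (le_abs_self _).trans (hgb t ht)
  have hbddB : BddBelow (g '' Set.Icc a b) := by
    refine ⟨-(K * (b - a)), ?_⟩
    rintro y ⟨t, ht, rfl⟩
    have := (hgb t ht)
    have := neg_abs_le (g t)
    linarith
  have hgub : ∀ t ∈ Set.Icc a b, g t ≤ M₂ := fun t ht => hM₂ ▸ le_csSup hbddA ⟨t, ht, rfl⟩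
  have hglb : ∀ t ∈ Set.Icc a b, m₂ ≤ g t := fun t ht => hm₂ ▸ csInf_le hbddB ⟨t, ht, rfl⟩
  set c₀ : ℝ := (M₂ + m₂) / 2 with hc₀def
  have hgc : ∀ t ∈ Set.Icc a b, |g t - c₀| ≤ (M₂ - m₂) / 2 := fun t ht =>
    abs_le.2 ⟨by have := hglb t ht; rw [hc₀def]; linarith, by have := hgub t ht; rw [hc₀def]; linarith⟩
  have hM₂m₂ : 0 ≤ (M₂ - m₂) / 2 := le_trans (abs_nonneg _) (hgc a ⟨le_rfl, hab.le⟩)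
  -- the centered integral J
  have i_hc : IntervalIntegrable (fun t => h t - μ) volume a b := hint_h.sub intervalIntegrable_const
  have efun : (fun t => (g t - c₀) * (h t - μ)) =
      fun t => g t * h t - c₀ * h t - μ * g t + c₀ * μ := by funext t; ring
  have i_J : IntervalIntegrable (fun t => (g t - c₀) * (h t - μ)) volume a b := by
    rw [efun]
    exact ((hghint.sub (hint_h.const_mul c₀)).sub (hgint.const_mul μ)).add intervalIntegrable_const
  set J : ℝ := ∫ t in a..b, (g t - c₀) * (h t - μ) with hJdef
  have hJval : J = (∫ t in a..b, g t * h t) - μ * A := by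
    rw [hJdef, efun,
      intervalIntegral.integral_add ((hghint.sub (hint_h.const_mul c₀)).sub (hgint.const_mul μ))
        intervalIntegrable_const,
      intervalIntegral.integral_sub (hghint.sub (hint_h.const_mul c₀)) (hgint.const_mul μ),
      intervalIntegral.integral_sub hghint (hint_h.const_mul c₀),
      intervalIntegral.integral_const_mul, intervalIntegral.integral_const_mul,
      intervalIntegral.integral_const, smul_eq_mul, ← hBdef, ← hAdef, hμB]
    ring
  -- rewrite Lfun
  have hLf : Lfun P f n a b x = ((-1 : ℝ) ^ (n - 1) / ((n : ℝ) * (b - a))) * J := by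
    rw [Lfun, hJval]
    have eI : (∫ t in a..b, (P (n - 1)).eval t * Skernel a b x t * iteratedDeriv n f t)
        = ∫ t in a..b, g t * h t := by
      refine intervalIntegral.integral_congr fun t _ => ?_
      rw [hgdef, hhdef]
    rw [eI, show iteratedDeriv (n - 1) f b - iteratedDeriv (n - 1) f a = B from hHh.symm,
      ← hGdef]
    have hAG : A = (b - a) * G := hA
    have hBμ : B = μ * (b - a) := hμB
    rw [hAG, hBμ]
    field_simp
  -- the Grüss-type bound on J
  set φ : ℝ → ℝ := fun t => max (h t - μ) 0 with hφdef
  have i_φ : IntervalIntegrable φ volume a b := by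
    refine ContinuousOn.intervalIntegrable_of_Icc hab.le (fun t ht => ?_)
    exact ((hcont_h t ht).sub continuousWithinAt_const).max continuousWithinAt_const
  have i_abs : IntervalIntegrable (fun t => |h t - μ|) volume a b := i_hc.abs
  have habsφ : ∀ t, |h t - μ| = 2 * φ t - (h t - μ) := by
    intro t
    rcases le_total (h t - μ) 0 with hc | hc
    · rw [abs_of_nonpos hc, hφdef]; simp only [max_eq_right hc]; ring
    · rw [abs_of_nonneg hc, hφdef]; simp only [max_eq_left hc]; ring
  have hint_abs : ∫ t in a..b, |h t - μ| = 2 * ∫ t in a..b, φ t := by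
    have e : ∫ t in a..b, |h t - μ| = ∫ t in a..b, (2 * φ t - (h t - μ)) :=
      intervalIntegral.integral_congr fun t _ => habsφ t
    rw [e, intervalIntegral.integral_sub (i_φ.const_mul 2) i_hc,
      intervalIntegral.integral_const_mul,
      intervalIntegral.integral_sub hint_h intervalIntegrable_const,
      intervalIntegral.integral_const, smul_eq_mul, ← hBdef, hμB]
    ring
  have hφbound : ∫ t in a..b, φ t ≤ (b - a) * (M₁ - m₁) / 4 := by
    rcases eq_or_lt_of_le hm₁M₁ with heq | hlt
    · -- degenerate case M₁ = m₁
      have hconst : ∀ t ∈ Set.Icc a b, h t = m₁ := by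
        intro t ht
        obtain ⟨l, u⟩ := hmM' t ht
        linarith [heq]
      have hBval : B = m₁ * (b - a) := by
        rw [hBdef]
        have : ∫ t in a..b, h t = ∫ t in a..b, m₁ :=
          intervalIntegral.integral_congr fun t ht => hconst t (by rwa [uIcc_of_le hab.le] at ht)
        rw [this, intervalIntegral.integral_const, smul_eq_mul]; ring
      have hμval : μ = m₁ := by rw [hμdef, hBval]; field_simp
      have : ∫ t in a..b, φ t = ∫ t in a..b, (0:ℝ) := by
        refine intervalIntegral.integral_congr fun t ht => ?_
        rw [uIcc_of_le hab.le] at ht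
        rw [hφdef]
        simp [hconst t ht, hμval]
      rw [this]
      rw [intervalIntegral.integral_zero]
      nlinarith [hba.le]
    · -- main case m₁ < M₁
      set c₁ : ℝ := (M₁ - μ) / (M₁ - m₁) with hc₁def
      have hpt : ∀ t ∈ Set.Icc a b, φ t ≤ c₁ * (h t - m₁) := by
        intro t ht
        obtain ⟨l, u⟩ := hmM' t ht
        rw [hφdef]
        refine max_le ?_ ?_
        · rw [hc₁def, div_mul_eq_mul_div, le_div_iff₀ (by linarith)]
          nlinarith
        · exact mul_nonneg (div_nonneg (by linarith) (by linarith)) (by linarith)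
      have hIb : ∫ t in a..b, φ t ≤ c₁ * (B - m₁ * (b - a)) := by
        have := intervalIntegral.integral_mono_on hab.le i_φ
          ((hint_h.sub intervalIntegrable_const).const_mul c₁) hpt
        rwa [intervalIntegral.integral_const_mul,
          intervalIntegral.integral_sub hint_h intervalIntegrable_const,
          intervalIntegral.integral_const, smul_eq_mul, ← hBdef, mul_comm (b-a) m₁] at this
      refine hIb.trans ?_
      rw [hμB, hc₁def, div_mul_eq_mul_div, div_le_iff₀ (by linarith : (0:ℝ) < M₁ - m₁)]
      nlinarith [sq_nonneg (M₁ + m₁ - 2 * μ), hba.le, mul_le_mul_of_nonneg_left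
        (by nlinarith [sq_nonneg (M₁ + m₁ - 2 * μ)] : (M₁ - μ) * (μ - m₁) ≤ (M₁ - m₁)^2 / 4) hba.le]
  have hJbound : |J| ≤ (M₂ - m₂) / 2 * ((b - a) * (M₁ - m₁) / 2) := by
    have h1 : |J| ≤ ∫ t in a..b, |(g t - c₀) * (h t - μ)| :=
      intervalIntegral.abs_integral_le_integral_abs hab.le
    have h2 : ∫ t in a..b, |(g t - c₀) * (h t - μ)| ≤
        ∫ t in a..b, (M₂ - m₂) / 2 * |h t - μ| := by
      refine intervalIntegral.integral_mono_on hab.le i_J.abs (i_abs.const_mul _) fun t ht => ?_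
      rw [abs_mul]
      exact mul_le_mul_of_nonneg_right (hgc t ht) (abs_nonneg _)
    have h3 : ∫ t in a..b, (M₂ - m₂) / 2 * |h t - μ| =
        (M₂ - m₂) / 2 * ∫ t in a..b, |h t - μ| := intervalIntegral.integral_const_mul _ _
    have h4 : ∫ t in a..b, |h t - μ| ≤ (b - a) * (M₁ - m₁) / 2 := by
      rw [hint_abs]; linarith [hφbound]
    calc |J| ≤ ∫ t in a..b, (M₂ - m₂) / 2 * |h t - μ| := h1.trans h2
      _ = (M₂ - m₂) / 2 * ∫ t in a..b, |h t - μ| := h3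
      _ ≤ (M₂ - m₂) / 2 * ((b - a) * (M₁ - m₁) / 2) :=
          mul_le_mul_of_nonneg_left h4 hM₂m₂
  -- conclude
  rw [hLf, abs_mul, abs_div, abs_pow, abs_neg, abs_one, one_pow,
    abs_of_pos (mul_pos hnR hba)]
  calc 1 / ((n:ℝ) * (b - a)) * |J|
      ≤ 1 / ((n:ℝ) * (b - a)) * ((M₂ - m₂) / 2 * ((b - a) * (M₁ - m₁) / 2)) := by
        exact mul_le_mul_of_nonneg_left hJbound (by positivity)
    _ = 1 / (4 * (n:ℝ)) * (M₁ - m₁) * (M₂ - m₂) := by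
        field_simp
        ring
end
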